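/- Let v : [0,1] → ℂ² be continuously differentiable and let λ ∈ ℂ satisfy |λ| ≥ sup_{x∈[0,1]} |v(x)|. Define W(s) = i·J·V(v(s))² − V(v′(s)) and a_s(λ) = (𝟙₃ − V(v(s))/(2λ))⁻¹, and define the iterates X₀(x,λ) = e^{−iλxJ}, Xₙ(x,λ) = ∫₀ˣ e^{iλ(s−x)J} · W(s) · a_s(λ) · X_{n−1}(s,λ) ds for n ≥ 1. Then for every n ≥ 0 and x ∈ [0,1]: ‖Xₙ(x,λ)‖ ≤ (2ⁿ/n!) · e^{x|Im λ|} · (∫₀ˣ ‖W(s)‖ ds)ⁿ. -/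

import Mathlib

open MeasureTheory Complex Matrix

attribute [local instance] Matrix.normedAddCommGroup Matrix.normedSpace

set_option synthInstance.maxHeartbeats 1000000
set_option maxHeartbeats 4000000

noncomputable section

instance matENormedAddMonoid : ENormedAddMonoid (Matrix (Fin 3) (Fin 3) ℂ) :=
  NormedAddCommGroup.toENormedAddCommMonoid.toENormedAddMonoid

instance matPseudoMetrizable : TopologicalSpace.PseudoMetrizableSpace (Matrix (Fin 3) (Fin 3) ℂ) :=
  inferInstanceAs (TopologicalSpace.PseudoMetrizableSpace (Fin 3 → Fin 3 → ℂ))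

/-- `J = diag(1,-1,-1)`. -/
def Jmat : Matrix (Fin 3) (Fin 3) ℂ := Matrix.diagonal ![1, -1, -1]

/-- The 3×3 matrix `V(a) = [[0, a*],[a, 0]]` for `a = (a₁,a₂) ∈ ℂ²`. -/
def Vmat (a₁ a₂ : ℂ) : Matrix (Fin 3) (Fin 3) ℂ :=
  !![0, (starRingEnd ℂ) a₁, (starRingEnd ℂ) a₂; a₁, 0, 0; a₂, 0, 0]

/-- Operator norm of a 3×3 complex matrix, acting on Euclidean `ℂ³`. -/
def opNorm (A : Matrix (Fin 3) (Fin 3) ℂ) : ℝ :=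
  ‖Matrix.toEuclideanCLM (𝕜 := ℂ) (n := Fin 3) A‖

/- ### Auxiliary lemmas -/

lemma opNorm_nonneg' (A : Matrix (Fin 3) (Fin 3) ℂ) : 0 ≤ opNorm A := norm_nonneg _

lemma opNorm_mul_le' (A B : Matrix (Fin 3) (Fin 3) ℂ) : opNorm (A*B) ≤ opNorm A * opNorm B := by
  rw [opNorm, _root_.map_mul]; exact norm_mul_le _ _

lemma opNorm_smul' (c : ℂ) (A : Matrix (Fin 3) (Fin 3) ℂ) :
    opNorm (c • A) = ‖c‖ * opNorm A := by
  rw [opNorm, _root_.map_smul (Matrix.toEuclideanCLM (𝕜 := ℂ) (n := Fin 3)) c A]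
  exact norm_smul c _

lemma opNorm_le_bound' (A : Matrix (Fin 3) (Fin 3) ℂ) {C : ℝ} (hC : 0 ≤ C)
    (h : ∀ x : EuclideanSpace ℂ (Fin 3),
      ‖Matrix.toEuclideanCLM (𝕜 := ℂ) (n := Fin 3) A x‖ ≤ C * ‖x‖) :
    opNorm A ≤ C :=
  ContinuousLinearMap.opNorm_le_bound _ hC h

/-- Bundled version of `toEuclideanCLM` as a continuous linear map. -/
def PhiLM : Matrix (Fin 3) (Fin 3) ℂ →ₗ[ℂ]
    (EuclideanSpace ℂ (Fin 3) →L[ℂ] EuclideanSpace ℂ (Fin 3)) where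
  toFun A := Matrix.toEuclideanCLM (𝕜 := ℂ) (n := Fin 3) A
  map_add' A B := map_add _ A B
  map_smul' c A := _root_.map_smul (Matrix.toEuclideanCLM (𝕜 := ℂ) (n := Fin 3)) c A

def PhiCLM : Matrix (Fin 3) (Fin 3) ℂ →L[ℂ]
    (EuclideanSpace ℂ (Fin 3) →L[ℂ] EuclideanSpace ℂ (Fin 3)) :=
  LinearMap.toContinuousLinearMap PhiLM

lemma PhiCLM_apply (A : Matrix (Fin 3) (Fin 3) ℂ) :
    PhiCLM A = Matrix.toEuclideanCLM (𝕜 := ℂ) (n := Fin 3) A := rfl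

lemma opNorm_eq_PhiCLM (A : Matrix (Fin 3) (Fin 3) ℂ) : opNorm A = ‖PhiCLM A‖ := rfl

lemma opNorm_continuous : Continuous opNorm := PhiCLM.continuous.norm

/-- Left multiplication as a continuous linear map. -/
def lmulCLM (B : Matrix (Fin 3) (Fin 3) ℂ) :
    Matrix (Fin 3) (Fin 3) ℂ →L[ℂ] Matrix (Fin 3) (Fin 3) ℂ :=
  LinearMap.toContinuousLinearMap (LinearMap.mulLeft ℂ B)

lemma lmulCLM_apply (B M : Matrix (Fin 3) (Fin 3) ℂ) : lmulCLM B M = B * M := rfl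

lemma opNorm_intervalIntegral_le {f : ℝ → Matrix (Fin 3) (Fin 3) ℂ} {x : ℝ} (hx : 0 ≤ x)
    (hf : IntervalIntegrable f volume 0 x) :
    opNorm (∫ s in (0:ℝ)..x, f s) ≤ ∫ s in (0:ℝ)..x, opNorm (f s) := by
  rw [opNorm_eq_PhiCLM, show PhiCLM (∫ s in (0:ℝ)..x, f s) = ∫ s in (0:ℝ)..x, PhiCLM (f s) from
    (PhiCLM.intervalIntegral_comp_comm hf).symm]
  exact intervalIntegral.norm_integral_le_integral_norm hx

lemma integral_lmul {B : Matrix (Fin 3) (Fin 3) ℂ} {f : ℝ → Matrix (Fin 3) (Fin 3) ℂ} {x : ℝ}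
    (hf : IntervalIntegrable f volume 0 x) :
    (∫ s in (0:ℝ)..x, B * f s) = B * ∫ s in (0:ℝ)..x, f s :=
  (lmulCLM B).intervalIntegral_comp_comm hf

/-- Explicit diagonal form of `exp (c • J)`. -/
def Dg (c : ℂ) : Matrix (Fin 3) (Fin 3) ℂ :=
  Matrix.diagonal ![Complex.exp c, Complex.exp (-c), Complex.exp (-c)]

lemma exp_smul_J (c : ℂ) : NormedSpace.exp (c • Jmat) = Dg c := by
  have h1 : c • Jmat = Matrix.diagonal ![c, -c, -c] := by
    ext i j
    fin_cases i <;> fin_cases j <;> simp [Jmat, Matrix.diagonal_apply]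
  rw [h1, Matrix.exp_diagonal]
  ext i j
  fin_cases i <;> fin_cases j <;>
    simp [Dg, Matrix.diagonal_apply, Pi.coe_exp, ← Complex.exp_eq_exp_ℂ]

lemma Dg_mul (a b : ℂ) : Dg a * Dg b = Dg (a + b) := by
  rw [Dg, Dg, Dg, Matrix.diagonal_mul_diagonal]
  ext i j
  fin_cases i <;> fin_cases j <;>
    simp [Matrix.diagonal_apply, ← Complex.exp_add] <;> ring_nf

lemma Dg_continuous {f : ℝ → ℂ} (hf : Continuous f) : Continuous fun x : ℝ => Dg (f x) := by
  have h1 : Continuous fun x : ℝ => Complex.exp (f x) := Complex.continuous_exp.comp hf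
  have h2 : Continuous fun x : ℝ => Complex.exp (-f x) := Complex.continuous_exp.comp hf.neg
  apply continuous_matrix
  intro i j
  fin_cases i <;> fin_cases j <;>
    simp only [Dg, Matrix.diagonal_apply, Matrix.cons_val_zero, Matrix.cons_val_one,
      Matrix.head_cons, Matrix.cons_val_two, Matrix.tail_cons, if_true, if_false,
      Fin.isValue, Matrix.cons_val', Matrix.empty_val', Matrix.cons_val_fin_one] <;>
    first
      | exact continuous_const
      | exact h1
      | exact h2
      | (apply Continuous.if_const <;> first | exact continuous_const | exact h1 | exact h2)

lemma sqrt_sum_le {M : ℝ} (hM : 0 ≤ M) (u v : ℝ) (h : u ≤ M^2 * v) :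
    Real.sqrt u ≤ M * Real.sqrt v := by
  calc Real.sqrt u ≤ Real.sqrt (M^2 * v) := Real.sqrt_le_sqrt h
  _ = M * Real.sqrt v := by rw [Real.sqrt_mul (sq_nonneg M), Real.sqrt_sq hM]

lemma opNorm_diagonal_le (d : Fin 3 → ℂ) {M : ℝ} (hM : 0 ≤ M)
    (h : ∀ i, ‖d i‖ ≤ M) : opNorm (Matrix.diagonal d) ≤ M := by
  refine opNorm_le_bound' _ hM fun x => ?_
  have hx : ∀ i : Fin 3, (Matrix.toEuclideanCLM (𝕜 := ℂ) (n := Fin 3) (Matrix.diagonal d) x) i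
      = d i * x i := by
    intro i
    show (Matrix.diagonal d).mulVec x i = _
    rw [Matrix.mulVec_diagonal]
  rw [EuclideanSpace.norm_eq, EuclideanSpace.norm_eq]
  refine sqrt_sum_le hM _ _ ?_
  have e : ∀ i : Fin 3, ‖d i * x i‖^2 ≤ M^2 * ‖x i‖^2 := by
    intro i
    rw [norm_mul, mul_pow]
    have hd2 : ‖d i‖^2 ≤ M^2 := by nlinarith [h i, norm_nonneg (d i)]
    nlinarith [hd2, sq_nonneg (‖x i‖)]
  simp only [hx, Fin.sum_univ_three]
  nlinarith [e 0, e 1, e 2]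

lemma opNorm_Dg (c : ℂ) : opNorm (Dg c) ≤ Real.exp |c.re| := by
  refine opNorm_diagonal_le _ (Real.exp_nonneg _) fun i => ?_
  fin_cases i <;> simp [Complex.norm_exp] <;>
    first | exact le_abs_self _ | exact neg_le_abs _

lemma opNorm_V (a₁ a₂ : ℂ) : opNorm (Vmat a₁ a₂) ≤ Real.sqrt (‖a₁‖^2 + ‖a₂‖^2) := by
  refine opNorm_le_bound' _ (Real.sqrt_nonneg _) fun x => ?_
  have hx : ∀ i : Fin 3, (Matrix.toEuclideanCLM (𝕜 := ℂ) (n := Fin 3) (Vmat a₁ a₂) x) i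
      = (Vmat a₁ a₂).mulVec x i := fun _ => rfl
  rw [EuclideanSpace.norm_eq, EuclideanSpace.norm_eq]
  refine sqrt_sum_le (Real.sqrt_nonneg _) _ _ ?_
  rw [Real.sq_sqrt (by positivity)]
  simp only [hx, Fin.sum_univ_three]
  have h0 : (Vmat a₁ a₂).mulVec x 0 = (starRingEnd ℂ) a₁ * x 1 + (starRingEnd ℂ) a₂ * x 2 := by
    simp [Vmat, Matrix.mulVec, dotProduct, Fin.sum_univ_three, Matrix.vecHead, Matrix.vecTail]
  have h1 : (Vmat a₁ a₂).mulVec x 1 = a₁ * x 0 := by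
    simp [Vmat, Matrix.mulVec, dotProduct, Fin.sum_univ_three, Matrix.vecHead, Matrix.vecTail]
  have h2 : (Vmat a₁ a₂).mulVec x 2 = a₂ * x 0 := by
    simp [Vmat, Matrix.mulVec, dotProduct, Fin.sum_univ_three, Matrix.vecHead, Matrix.vecTail]
  rw [h0, h1, h2]
  have hb : ‖(starRingEnd ℂ) a₁ * x 1 + (starRingEnd ℂ) a₂ * x 2‖ ≤ ‖a₁‖ * ‖x 1‖ + ‖a₂‖ * ‖x 2‖ := by
    calc ‖(starRingEnd ℂ) a₁ * x 1 + (starRingEnd ℂ) a₂ * x 2‖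
        ≤ ‖(starRingEnd ℂ) a₁ * x 1‖ + ‖(starRingEnd ℂ) a₂ * x 2‖ := norm_add_le _ _
    _ = ‖a₁‖ * ‖x 1‖ + ‖a₂‖ * ‖x 2‖ := by
        rw [norm_mul, norm_mul, RCLike.norm_conj, RCLike.norm_conj]
  have hb2 : ‖(starRingEnd ℂ) a₁ * x 1 + (starRingEnd ℂ) a₂ * x 2‖^2
      ≤ (‖a₁‖ * ‖x 1‖ + ‖a₂‖ * ‖x 2‖)^2 := by
    nlinarith [norm_nonneg ((starRingEnd ℂ) a₁ * x 1 + (starRingEnd ℂ) a₂ * x 2),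
      norm_nonneg (x 1), norm_nonneg (x 2), norm_nonneg a₁, norm_nonneg a₂]
  rw [norm_mul, norm_mul, mul_pow, mul_pow]
  nlinarith [hb2, sq_nonneg (‖a₁‖ * ‖x 2‖ - ‖a₂‖ * ‖x 1‖), sq_nonneg (‖x 0‖),
    norm_nonneg a₁, norm_nonneg a₂, norm_nonneg (x 0), norm_nonneg (x 1), norm_nonneg (x 2)]

lemma one_sub_mul_inv' (A : Matrix (Fin 3) (Fin 3) ℂ) (h : opNorm A ≤ 1/2) :
    (1 - A) * (1 - A)⁻¹ = 1 ∧ opNorm (1 - A)⁻¹ ≤ 2 := by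
  have hT : ‖Matrix.toEuclideanCLM (𝕜 := ℂ) (n := Fin 3) A‖ < 1 := lt_of_le_of_lt h (by norm_num)
  set T := Matrix.toEuclideanCLM (𝕜 := ℂ) (n := Fin 3) A with hTdef
  have h' : ‖T‖ ≤ 1/2 := h
  set S := ∑' n : ℕ, T ^ n with hSdef
  have hmul : (1 - T) * S = 1 := mul_neg_geom_series T hT
  have hB : (1 - A) * (Matrix.toEuclideanCLM (𝕜 := ℂ) (n := Fin 3)).symm S = 1 := by
    apply (Matrix.toEuclideanCLM (𝕜 := ℂ) (n := Fin 3)).injective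
    simp only [_root_.map_mul, _root_.map_one, _root_.map_sub]
    have e1 : (Matrix.toEuclideanCLM (𝕜 := ℂ) (n := Fin 3)).toRingEquiv
        ((Matrix.toEuclideanCLM (𝕜 := ℂ) (n := Fin 3)).symm S) = S :=
      (Matrix.toEuclideanCLM (𝕜 := ℂ) (n := Fin 3)).apply_symm_apply S
    have e2 : (Matrix.toEuclideanCLM (𝕜 := ℂ) (n := Fin 3)).toRingEquiv A = T := rfl
    rw [e1, e2]
    exact hmul
  have hinv : (1 - A)⁻¹ = (Matrix.toEuclideanCLM (𝕜 := ℂ) (n := Fin 3)).symm S :=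
    Matrix.inv_eq_right_inv hB
  refine ⟨by rw [hinv]; exact hB, ?_⟩
  rw [hinv, opNorm, StarAlgEquiv.apply_symm_apply]
  have hgeo := tsum_geometric_le_of_norm_lt_one T hT
  have hid : ‖(1 : EuclideanSpace ℂ (Fin 3) →L[ℂ] EuclideanSpace ℂ (Fin 3))‖ = 1 :=
    ContinuousLinearMap.norm_id
  have hinv2 : (1 - ‖T‖)⁻¹ ≤ 2 := by
    rw [show (2:ℝ) = ((1:ℝ)/2)⁻¹ by norm_num]
    apply inv_anti₀
    · norm_num
    · linarith [h']
  calc ‖S‖ ≤ ‖(1 : EuclideanSpace ℂ (Fin 3) →L[ℂ] EuclideanSpace ℂ (Fin 3))‖ - 1 + (1 - ‖T‖)⁻¹ :=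
        hgeo
  _ ≤ 2 := by rw [hid]; linarith

lemma re_I_mul (c : ℂ) (t : ℝ) : (Complex.I * c * (t:ℂ)).re = -c.im * t := by
  simp [Complex.mul_re]

lemma Vmat_decomp (a₁ a₂ : ℂ) : Vmat a₁ a₂ =
    a₁ • !![0,0,0;1,0,0;0,0,0] + a₂ • !![0,0,0;0,0,0;1,0,0]
    + (starRingEnd ℂ) a₁ • !![0,1,0;0,0,0;0,0,0]
    + (starRingEnd ℂ) a₂ • !![0,0,1;0,0,0;0,0,0] := by
  ext i j
  fin_cases i <;> fin_cases j <;> simp [Vmat, Matrix.vecHead, Matrix.vecTail]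

lemma Vmat_cont {f g : ℝ → ℂ} (hf : Continuous f) (hg : Continuous g) :
    Continuous fun s => Vmat (f s) (g s) := by
  simp only [Vmat_decomp]
  exact (((hf.smul continuous_const).add (hg.smul continuous_const)).add
    ((continuous_star.comp hf).smul continuous_const)).add
    ((continuous_star.comp hg).smul continuous_const)

/-- Bounds `‖Xₙ(x,λ)‖ ≤ (2ⁿ/n!)·e^{x|Im λ|}·(∫₀ˣ ‖W(s)‖ ds)ⁿ` for the modified
iterates, where `W = iJV² − V′` and `a_s(λ) = (𝟙 − V(v(s))/(2λ))⁻¹`. -/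
theorem statement14 (v₁ v₂ : ℝ → ℂ) (hv₁ : ContDiff ℝ 1 v₁) (hv₂ : ContDiff ℝ 1 v₂)
    (lam : ℂ)
    (hlam : ∀ x ∈ Set.Icc (0:ℝ) 1, Real.sqrt (‖v₁ x‖ ^ 2 + ‖v₂ x‖ ^ 2) ≤ ‖lam‖)
    (W : ℝ → Matrix (Fin 3) (Fin 3) ℂ)
    (hW : ∀ s : ℝ, W s = Complex.I • (Jmat * (Vmat (v₁ s) (v₂ s) * Vmat (v₁ s) (v₂ s)))
      - Vmat (deriv v₁ s) (deriv v₂ s))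
    (X : ℕ → ℝ → Matrix (Fin 3) (Fin 3) ℂ)
    (hX0 : ∀ x : ℝ, X 0 x = NormedSpace.exp ((-(Complex.I * lam * x)) • Jmat))
    (hXn : ∀ (n : ℕ) (x : ℝ), X (n + 1) x =
      ∫ s in (0:ℝ)..x,
        NormedSpace.exp ((Complex.I * lam * (s - x)) • Jmat) *
          (W s * ((1 - (2 * lam)⁻¹ • Vmat (v₁ s) (v₂ s))⁻¹ * X n s))) :
    ∀ (n : ℕ), ∀ x ∈ Set.Icc (0:ℝ) 1,
      opNorm (X n x) ≤ (2 ^ n / n.factorial) * Real.exp (x * |lam.im|) *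
        (∫ s in (0:ℝ)..x, opNorm (W s)) ^ n := by
  -- continuity of ingredients
  have hv₁c : Continuous v₁ := hv₁.continuous
  have hv₂c : Continuous v₂ := hv₂.continuous
  have hv₁d : Continuous (deriv v₁) := hv₁.continuous_deriv le_rfl
  have hv₂d : Continuous (deriv v₂) := hv₂.continuous_deriv le_rfl
  have hVcont : ∀ {f g : ℝ → ℂ}, Continuous f → Continuous g →
      Continuous fun s => Vmat (f s) (g s) := fun hf hg => Vmat_cont hf hg
  have hWc : Continuous W := by
    have hWe : W = fun s => Complex.I • (Jmat * (Vmat (v₁ s) (v₂ s) * Vmat (v₁ s) (v₂ s)))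
        - Vmat (deriv v₁ s) (deriv v₂ s) := funext hW
    rw [hWe]
    exact (((continuous_const.mul ((hVcont hv₁c hv₂c).mul
      (hVcont hv₁c hv₂c))).const_smul Complex.I)).sub (hVcont hv₁d hv₂d)
  -- the resolvent family aₛ
  set a : ℝ → Matrix (Fin 3) (Fin 3) ℂ :=
    fun s => (1 - (2 * lam)⁻¹ • Vmat (v₁ s) (v₂ s))⁻¹ with ha_def
  have hVnorm : ∀ s ∈ Set.Icc (0:ℝ) 1, opNorm ((2*lam)⁻¹ • Vmat (v₁ s) (v₂ s)) ≤ 1/2 := by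
    intro s hs
    rw [opNorm_smul']
    rcases eq_or_ne lam 0 with h0 | h0
    · simp [h0]
    · have hl : 0 < ‖lam‖ := norm_pos_iff.2 h0
      have h1 : ‖(2*lam)⁻¹‖ = (2 * ‖lam‖)⁻¹ := by
        rw [norm_inv, norm_mul]
        norm_num
      have h2 := hlam s hs
      have h3 := opNorm_V (v₁ s) (v₂ s)
      rw [h1]
      calc (2 * ‖lam‖)⁻¹ * opNorm (Vmat (v₁ s) (v₂ s))
          ≤ (2 * ‖lam‖)⁻¹ * ‖lam‖ := by
            apply mul_le_mul_of_nonneg_left (h3.trans h2) (by positivity)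
      _ = 1/2 := by field_simp [mul_comm]
  have ha_bound : ∀ s ∈ Set.Icc (0:ℝ) 1, opNorm (a s) ≤ 2 := fun s hs =>
    (one_sub_mul_inv' _ (hVnorm s hs)).2
  have ha_unit : ∀ s ∈ Set.Icc (0:ℝ) 1,
      (1 - (2*lam)⁻¹ • Vmat (v₁ s) (v₂ s)).det ≠ 0 := by
    intro s hs
    have := (one_sub_mul_inv' _ (hVnorm s hs)).1
    exact (Matrix.isUnit_det_of_right_inverse this).ne_zero
  have hYc : Continuous fun s => 1 - (2*lam)⁻¹ • Vmat (v₁ s) (v₂ s) :=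
    continuous_const.sub ((hVcont hv₁c hv₂c).fun_const_smul _)
  have ha_cont : ContinuousOn a (Set.Icc (0:ℝ) 1) := by
    have hrepr : ∀ s : ℝ, a s = Ring.inverse (1 - (2*lam)⁻¹ • Vmat (v₁ s) (v₂ s)).det
        • (1 - (2*lam)⁻¹ • Vmat (v₁ s) (v₂ s)).adjugate := fun s => Matrix.inv_def _
    have hre : ∀ s : ℝ, a s = ((1 - (2*lam)⁻¹ • Vmat (v₁ s) (v₂ s)).det)⁻¹
        • (1 - (2*lam)⁻¹ • Vmat (v₁ s) (v₂ s)).adjugate := by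
      intro s; rw [hrepr s, Ring.inverse_eq_inv']
    rw [funext hre]
    exact ((hYc.matrix_det.continuousOn.inv₀ ha_unit).smul
      hYc.matrix_adjugate.continuousOn)
  -- base representation
  have hX0' : ∀ x : ℝ, X 0 x = Dg (-(Complex.I * lam * x)) := fun x => by
    rw [hX0, exp_smul_J]
  -- primitive F
  set F : ℝ → ℝ := fun t => ∫ s in (0:ℝ)..t, opNorm (W s) with hFdef
  have hopWc : Continuous fun s => opNorm (W s) := opNorm_continuous.comp hWc
  have hFderiv : ∀ t : ℝ, HasDerivAt F (opNorm (W t)) t := fun t =>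
    intervalIntegral.integral_hasDerivAt_right (hopWc.intervalIntegrable _ _)
      (hopWc.stronglyMeasurableAtFilter _ _) hopWc.continuousAt
  have hFcont : Continuous F := continuous_iff_continuousAt.2 fun t => (hFderiv t).continuousAt
  have hFnn : ∀ t : ℝ, 0 ≤ t → 0 ≤ F t := fun t ht =>
    intervalIntegral.integral_nonneg ht (fun s _ => opNorm_nonneg' _)
  have hkey : ∀ (n : ℕ) (x : ℝ),
      (∫ s in (0:ℝ)..x, opNorm (W s) * F s ^ n) = F x ^ (n+1) / (n+1) := by
    intro n x
    have hder : ∀ t ∈ Set.uIcc (0:ℝ) x,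
        HasDerivAt (fun u => F u ^ (n+1) / (n+1)) (opNorm (W t) * F t ^ n) t := by
      intro t _
      have h1 : HasDerivAt (fun u => F u ^ (n+1)) (((n:ℝ)+1) * F t ^ n * opNorm (W t)) t := by
        have := (hFderiv t).pow (n+1)
        simp only [Nat.cast_add, Nat.cast_one, add_tsub_cancel_right] at this
        exact this
      have h2 := h1.div_const ((n:ℝ)+1)
      refine h2.congr_deriv ?_
      have hne : ((n:ℝ)+1) ≠ 0 := by positivity
      field_simp
      try ring
    have hint : IntervalIntegrable (fun s => opNorm (W s) * F s ^ n) volume 0 x :=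
      (hopWc.mul (hFcont.pow n)).intervalIntegrable _ _
    have := intervalIntegral.integral_eq_sub_of_hasDerivAt hder hint
    rw [this]
    have hF0 : F 0 = 0 := intervalIntegral.integral_same
    rw [hF0]
    simp
  -- main induction
  have main : ∀ n : ℕ, ContinuousOn (X n) (Set.Icc (0:ℝ) 1) ∧
      ∀ x ∈ Set.Icc (0:ℝ) 1, opNorm (X n x) ≤ (2 ^ n / n.factorial) *
        Real.exp (x * |lam.im|) * (F x) ^ n := by
    intro n
    induction n with
    | zero =>
      constructor
      · rw [funext hX0']
        exact (Dg_continuous (by fun_prop : Continuous fun x : ℝ =>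
          -(Complex.I * lam * (x:ℂ)))).continuousOn
      · intro x hx
        rw [hX0']
        have h1 := opNorm_Dg (-(Complex.I * lam * x))
        have h2 : (-(Complex.I * lam * (x:ℂ))).re = lam.im * x := by
          rw [Complex.neg_re, re_I_mul]; ring
        rw [h2] at h1
        have h3 : |lam.im * x| = x * |lam.im| := by
          rw [abs_mul, _root_.abs_of_nonneg hx.1]; ring
        rw [h3] at h1
        simpa using h1
    | succ n ih =>
      obtain ⟨ihc, ihb⟩ := ih
      -- the integrand without the exponential prefactor
      have hMc : ContinuousOn (fun s => W s * (a s * X n s)) (Set.Icc (0:ℝ) 1) :=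
        hWc.continuousOn.mul (ha_cont.mul ihc)
      have hgc : ContinuousOn (fun s : ℝ => Dg (Complex.I * lam * s) * (W s * (a s * X n s)))
          (Set.Icc (0:ℝ) 1) := (Dg_continuous (by fun_prop : Continuous fun s : ℝ => Complex.I * lam * (s:ℂ))).continuousOn.mul hMc
      have huIcc : Set.uIcc (0:ℝ) 1 = Set.Icc 0 1 := Set.uIcc_of_le (by norm_num)
      have hgint : IntervalIntegrable (fun s : ℝ => Dg (Complex.I * lam * s) * (W s * (a s * X n s)))
          volume 0 1 := (hgc.mono (by rw [huIcc])).intervalIntegrable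
      -- representation of X (n+1)
      have hrepr : ∀ x ∈ Set.Icc (0:ℝ) 1, X (n+1) x =
          Dg (-(Complex.I * lam * x)) *
            ∫ s in (0:ℝ)..x, Dg (Complex.I * lam * s) * (W s * (a s * X n s)) := by
        intro x hx
        rw [hXn]
        have hEq : ∀ s : ℝ, NormedSpace.exp ((Complex.I * lam * ((s:ℂ) - (x:ℂ))) • Jmat) *
            (W s * (a s * X n s)) = Dg (-(Complex.I * lam * x)) *
              (Dg (Complex.I * lam * s) * (W s * (a s * X n s))) := by
          intro s
          rw [exp_smul_J,
            show Dg (Complex.I * lam * ((s:ℂ) - (x:ℂ))) =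
              Dg (-(Complex.I * lam * x)) * Dg (Complex.I * lam * s) from by
                rw [Dg_mul]; congr 1; ring,
            mul_assoc]
        simp only [show ∀ s, (1 - (2 * lam)⁻¹ • Vmat (v₁ s) (v₂ s))⁻¹ = a s from fun s => rfl, hEq]
        exact integral_lmul (hgint.mono_set (by
          rw [Set.uIcc_of_le hx.1, huIcc]
          exact Set.Icc_subset_Icc le_rfl hx.2))
      constructor
      · -- continuity
        refine ContinuousOn.congr ?_ hrepr
        refine ContinuousOn.mul ?_ ?_
        · exact (Dg_continuous (by fun_prop : Continuous fun x : ℝ =>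
            -(Complex.I * lam * (x:ℂ)))).continuousOn
        · have := intervalIntegral.continuousOn_primitive_interval'
            (μ := volume) hgint (by rw [huIcc]; exact Set.left_mem_Icc.2 (by norm_num))
          rw [huIcc] at this
          exact this
      · -- the bound
        intro x hx
        have hsub : Set.Icc (0:ℝ) x ⊆ Set.Icc 0 1 := Set.Icc_subset_Icc le_rfl hx.2
        have hfint : IntervalIntegrable
            (fun s : ℝ => Dg (-(Complex.I * lam * x)) *
              (Dg (Complex.I * lam * s) * (W s * (a s * X n s)))) volume 0 x := by
          apply ContinuousOn.intervalIntegrable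
          rw [Set.uIcc_of_le hx.1]
          exact (ContinuousOn.mul continuousOn_const (hgc.mono hsub) :)
        have hXval : X (n+1) x = ∫ s in (0:ℝ)..x, Dg (-(Complex.I * lam * x)) *
            (Dg (Complex.I * lam * s) * (W s * (a s * X n s))) := by
          rw [hrepr x hx, ← integral_lmul]
          exact hgint.mono_set (by
            rw [Set.uIcc_of_le hx.1, huIcc]
            exact hsub)
        rw [hXval]
        have step1 := opNorm_intervalIntegral_le hx.1 hfint
        -- pointwise bound
        set C : ℝ := 2^(n+1) / n.factorial * Real.exp (x * |lam.im|) with hC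
        have hpt : ∀ s ∈ Set.Icc (0:ℝ) x,
            opNorm (Dg (-(Complex.I * lam * x)) *
              (Dg (Complex.I * lam * s) * (W s * (a s * X n s))))
            ≤ C * (opNorm (W s) * F s ^ n) := by
          intro s hs
          have hs1 : s ∈ Set.Icc (0:ℝ) 1 := hsub hs
          -- combine the two diagonal exponentials
          have hDD : Dg (-(Complex.I * lam * x)) * (Dg (Complex.I * lam * s) * (W s * (a s * X n s)))
              = Dg (Complex.I * lam * ((s:ℂ) - (x:ℂ))) * (W s * (a s * X n s)) := by
            rw [← mul_assoc, Dg_mul]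
            congr 2
            ring
          rw [hDD]
          have hXb := ihb s hs1
          have haB := ha_bound s hs1
          have hb1 : opNorm (a s * X n s) ≤ 2 * ((2 ^ n / n.factorial) *
              Real.exp (s * |lam.im|) * F s ^ n) := by
            refine (opNorm_mul_le' _ _).trans ?_
            have hXnn := opNorm_nonneg' (X n s)
            have hFn : (0:ℝ) ≤ F s ^ n := pow_nonneg (hFnn s hs.1) n
            have h2n : (0:ℝ) ≤ 2 ^ n / n.factorial * Real.exp (s * |lam.im|) * F s ^ n := by
              positivity
            exact mul_le_mul haB hXb hXnn (by norm_num)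
          have hb2 : opNorm (W s * (a s * X n s)) ≤ opNorm (W s) *
              (2 * ((2 ^ n / n.factorial) * Real.exp (s * |lam.im|) * F s ^ n)) :=
            (opNorm_mul_le' _ _).trans
              (mul_le_mul_of_nonneg_left hb1 (opNorm_nonneg' _))
          have hDgB : opNorm (Dg (Complex.I * lam * ((s:ℂ) - (x:ℂ))))
              ≤ Real.exp ((x - s) * |lam.im|) := by
            have := opNorm_Dg (Complex.I * lam * ((s:ℂ) - (x:ℂ)))
            have hre2 : (Complex.I * lam * ((s:ℂ) - (x:ℂ))).re = -lam.im * (s - x) := by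
              have : ((s:ℂ) - (x:ℂ)) = ((s - x : ℝ) : ℂ) := by push_cast; ring
              rw [this, re_I_mul]
            rw [hre2] at this
            have habs : |(-lam.im) * (s - x)| = (x - s) * |lam.im| := by
              rw [abs_mul, abs_neg, abs_sub_comm,
                _root_.abs_of_nonneg (by linarith [hs.2] : (0:ℝ) ≤ x - s)]
              ring
            rwa [habs] at this
          calc opNorm (Dg (Complex.I * lam * ((s:ℂ) - (x:ℂ))) * (W s * (a s * X n s)))
              ≤ opNorm (Dg (Complex.I * lam * ((s:ℂ) - (x:ℂ)))) *
                opNorm (W s * (a s * X n s)) := opNorm_mul_le' _ _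
          _ ≤ Real.exp ((x - s) * |lam.im|) * (opNorm (W s) *
                (2 * ((2 ^ n / n.factorial) * Real.exp (s * |lam.im|) * F s ^ n))) := by
              apply mul_le_mul hDgB hb2 (opNorm_nonneg' _) (Real.exp_nonneg _)
          _ = (Real.exp ((x - s) * |lam.im|) * Real.exp (s * |lam.im|)) *
                ((2 * (2 ^ n / n.factorial)) * (opNorm (W s) * F s ^ n)) := by ring
          _ = C * (opNorm (W s) * F s ^ n) := by
              rw [← Real.exp_add,
                show (x - s) * |lam.im| + s * |lam.im| = x * |lam.im| from by ring, hC]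
              ring
        have hlint : IntervalIntegrable (fun s => opNorm (Dg (-(Complex.I * lam * x)) *
            (Dg (Complex.I * lam * s) * (W s * (a s * X n s))))) volume 0 x := by
          apply ContinuousOn.intervalIntegrable
          rw [Set.uIcc_of_le hx.1]
          exact opNorm_continuous.comp_continuousOn (continuousOn_const.mul (hgc.mono hsub))
        have hrint : IntervalIntegrable (fun s => C * (opNorm (W s) * F s ^ n)) volume 0 x :=
          (continuous_const.mul (hopWc.mul (hFcont.pow n))).intervalIntegrable _ _
        have step2 : (∫ s in (0:ℝ)..x, opNorm (Dg (-(Complex.I * lam * x)) *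
            (Dg (Complex.I * lam * s) * (W s * (a s * X n s)))))
            ≤ ∫ s in (0:ℝ)..x, C * (opNorm (W s) * F s ^ n) :=
          intervalIntegral.integral_mono_on hx.1 hlint hrint hpt
        have step3 : (∫ s in (0:ℝ)..x, C * (opNorm (W s) * F s ^ n))
            = C * (F x ^ (n+1) / (n+1)) := by
          rw [intervalIntegral.integral_const_mul, hkey n x]
        have final : C * (F x ^ (n+1) / (n+1))
            = (2 ^ (n+1) / (n+1).factorial) * Real.exp (x * |lam.im|) * F x ^ (n+1) := by
          have h1 : ((n:ℝ)+1) ≠ 0 := by positivity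
          have h2 : ((n.factorial : ℝ)) ≠ 0 := Nat.cast_ne_zero.2 (Nat.factorial_ne_zero n)
          rw [hC, Nat.factorial_succ]
          push_cast
          field_simp
          try ring
          try tauto
        calc opNorm (∫ s in (0:ℝ)..x, Dg (-(Complex.I * lam * x)) *
              (Dg (Complex.I * lam * s) * (W s * (a s * X n s)))) ≤ _ := step1
        _ ≤ ∫ s in (0:ℝ)..x, C * (opNorm (W s) * F s ^ n) := step2
        _ = C * (F x ^ (n+1) / (n+1)) := step3
        _ = (2 ^ (n+1) / (n+1).factorial) * Real.exp (x * |lam.im|) * F x ^ (n+1) := final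
  intro n x hx
  exact (main n).2 x hx
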